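/- Let M > 0, x ∈ [−M, M], and y ∈ [0, M − x]. Then for every positive integer r, sign(x+y)·|x+y|^((r-1)/r) ≥ sign(x)·|x|^((r-1)/r) + ((r−1)/r)·M^(−1/r)·y. -/

import Mathlib

/-- Signed power: `⌈y⌋^p = |y|^p * sign y`. -/
noncomputable def spow (p : ℝ) (y : ℝ) : ℝ := |y| ^ p * Real.sign y

lemma spow_of_nonneg {p t : ℝ} (hp : 0 < p) (ht : 0 ≤ t) : spow p t = t ^ p := by
  rcases eq_or_lt_of_le ht with h | h
  · simp [spow, ← h, Real.zero_rpow hp.ne']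
  · simp [spow, Real.sign_of_pos h, abs_of_pos h]

lemma spow_of_neg {p t : ℝ} (ht : t < 0) : spow p t = -(-t) ^ p := by
  simp [spow, Real.sign_of_neg ht, abs_of_neg ht]

lemma key {p M u v : ℝ} (hp : 0 < p) (hp1 : p ≤ 1) (hM : 0 < M)
    (hu : 0 ≤ u) (huv : u ≤ v) (hv : v ≤ M) :
    u ^ p + p * M ^ (p - 1) * (v - u) ≤ v ^ p := by
  set g : ℝ → ℝ := fun t => t ^ p - p * M ^ (p - 1) * t with hg
  have hmono : MonotoneOn g (Set.Icc 0 M) := by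
    apply monotoneOn_of_deriv_nonneg (convex_Icc 0 M)
    · exact ContinuousOn.sub
        (fun t _ => (Real.continuousAt_rpow_const t p (Or.inr hp.le)).continuousWithinAt)
        (Continuous.continuousOn (by continuity))
    · intro t ht
      rw [interior_Icc] at ht
      exact (((Real.hasDerivAt_rpow_const (Or.inl ht.1.ne')).sub
        ((hasDerivAt_id t).const_mul (p * M ^ (p - 1)))).differentiableAt).differentiableWithinAt
    · intro t ht
      rw [interior_Icc] at ht
      have hd : HasDerivAt g (p * t ^ (p - 1) - p * M ^ (p - 1) * 1) t :=
        (Real.hasDerivAt_rpow_const (Or.inl ht.1.ne')).sub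
          ((hasDerivAt_id t).const_mul (p * M ^ (p - 1)))
      rw [hd.deriv]
      have : M ^ (p - 1) ≤ t ^ (p - 1) :=
        Real.rpow_le_rpow_of_nonpos ht.1 (ht.2.le) (by linarith)
      nlinarith
  have := hmono ⟨hu, huv.trans hv⟩ ⟨hu.trans huv, hv⟩ huv
  simp only [hg] at this
  linarith

theorem stmt1 (M x y : ℝ) (hM : 0 < M) (hx : x ∈ Set.Icc (-M) M)
    (hy : y ∈ Set.Icc (0 : ℝ) (M - x)) (r : ℕ) (hr : 0 < r) :
    spow (((r : ℝ) - 1) / r) x + ((r : ℝ) - 1) / r * M ^ (-(1 : ℝ) / r) * y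
      ≤ spow (((r : ℝ) - 1) / r) (x + y) := by
  obtain ⟨hx1, hx2⟩ := hx
  obtain ⟨hy1, hy2⟩ := hy
  have hr0 : (0 : ℝ) < r := by exact_mod_cast hr
  set p : ℝ := ((r : ℝ) - 1) / r with hpdef
  have hpe : p - 1 = -(1:ℝ) / r := by rw [hpdef, div_sub_one hr0.ne']; ring
  rcases eq_or_lt_of_le (show 1 ≤ r from hr) with h1 | h2
  · -- r = 1
    have hp0 : p = 0 := by simp [hpdef, ← h1]
    rw [hp0]
    have hs : ∀ t : ℝ, spow 0 t = Real.sign t := by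
      intro t; simp [spow]
    rw [hs, hs]
    simp only [zero_mul]
    rcases lt_trichotomy x 0 with hx0 | hx0 | hx0
    · have : (-1 : ℝ) ≤ Real.sign (x + y) := by
        rcases lt_trichotomy (x + y) 0 with h | h | h
        · rw [Real.sign_of_neg h]
        · rw [h, Real.sign_zero]; norm_num
        · rw [Real.sign_of_pos h]; norm_num
      rw [Real.sign_of_neg hx0]; linarith
    · subst hx0
      rcases eq_or_lt_of_le hy1 with h | h
      · simp [← h]
      · simp [Real.sign_of_pos h]
    · rw [Real.sign_of_pos hx0, Real.sign_of_pos (by linarith : 0 < x + y)]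
      norm_num
  · -- r ≥ 2
    have hr2 : (2 : ℝ) ≤ r := by exact_mod_cast h2
    have hp : 0 < p := by
      apply div_pos <;> linarith
    have hp1 : p ≤ 1 := by
      rw [hpdef, div_le_one hr0]; linarith
    rw [← hpe]
    rcases le_or_gt 0 x with hx0 | hx0
    · rw [spow_of_nonneg hp hx0, spow_of_nonneg hp (by linarith : (0:ℝ) ≤ x + y)]
      have := key hp hp1 hM hx0 (by linarith : x ≤ x + y) (by linarith : x + y ≤ M)
      linarith
    · rcases le_or_gt (x + y) 0 with hxy0 | hxy0
      · rw [spow_of_neg hx0]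
        rcases eq_or_lt_of_le hxy0 with h | h
        · rw [h, spow_of_nonneg hp le_rfl, Real.zero_rpow hp.ne']
          have := key hp hp1 hM le_rfl (by linarith : (0:ℝ) ≤ -x) (by linarith : -x ≤ M)
          rw [Real.zero_rpow hp.ne'] at this
          have hyx : p * M ^ (p - 1) * y = p * M ^ (p - 1) * -x := by
            have : y = -x := by linarith
            rw [this]
          linarith
        · rw [spow_of_neg h]
          have := key hp hp1 hM (by linarith : (0:ℝ) ≤ -(x+y)) (by linarith : -(x+y) ≤ -x)
            (by linarith : -x ≤ M)
          nlinarith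
      · rw [spow_of_neg hx0, spow_of_nonneg hp hxy0.le]
        have h1 := key hp hp1 hM le_rfl (by linarith : (0:ℝ) ≤ -x) (by linarith : -x ≤ M)
        have h2 := key hp hp1 hM le_rfl hxy0.le (by linarith : x + y ≤ M)
        rw [Real.zero_rpow hp.ne'] at h1 h2
        nlinarith
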